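/- arXiv:2001.10326 — 8 statements merged into one kernel-verified Lean document; each statement's English description precedes it below -/
import Mathlib

section
/- Let α, ρ, u, a, u_s, b be real numbers with α ≠ 0 and ρ > 0, and let C be the 5×5 real matrix with rows (u_s, 0, 0, 0, 0), (ρ(u−u_s)/α, u, ρ, 0, 0), (0, a²/ρ, u, b/ρ, 0), (0, 0, 0, u, 0), (0, 0, 0, 0, 0). Then for every λ ∈ ℝ, det(C − λ·I₅) = −λ·(u_s − λ)·(u − λ)·((u − λ)² − a²). In particular the eigenvalues of C are exactly u_s, u − a, u, u + a and 0, and they do not depend on the volume fraction α. -/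
set_option maxRecDepth 4000


/-- The quasilinear system matrix `C` of the reduced Baer–Nunziato model in
primitive variables `V = (α, ρ, u, s, u_s)` has characteristic polynomial
`det (C - λ I) = -λ (u_s - λ) (u - λ) ((u - λ)² - a²)`; in particular its
eigenvalues are exactly `u_s, u - a, u, u + a, 0`, independent of `α`. -/
theorem reducedBN_charpoly (α ρ u a u_s b : ℝ) (hα : α ≠ 0) (hρ : 0 < ρ) :
    let C : Matrix (Fin 5) (Fin 5) ℝ :=
      !![u_s, 0, 0, 0, 0;
         ρ * (u - u_s) / α, u, ρ, 0, 0;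
         0, a ^ 2 / ρ, u, b / ρ, 0;
         0, 0, 0, u, 0;
         0, 0, 0, 0, 0]
    ∀ lam : ℝ,
      (C - lam • (1 : Matrix (Fin 5) (Fin 5) ℝ)).det
        = -lam * (u_s - lam) * (u - lam) * ((u - lam) ^ 2 - a ^ 2) ∧
      ((C - lam • (1 : Matrix (Fin 5) (Fin 5) ℝ)).det = 0 ↔
        lam = u_s ∨ lam = u - a ∨ lam = u ∨ lam = u + a ∨ lam = 0) := by
  intro C lam
  have hρ' : ρ ≠ 0 := ne_of_gt hρ
  have hdet : (C - lam • (1 : Matrix (Fin 5) (Fin 5) ℝ)).det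
      = -lam * (u_s - lam) * (u - lam) * ((u - lam) ^ 2 - a ^ 2) := by
    show (!![u_s, 0, 0, 0, 0;
         ρ * (u - u_s) / α, u, ρ, 0, 0;
         0, a ^ 2 / ρ, u, b / ρ, 0;
         0, 0, 0, u, 0;
         0, 0, 0, 0, 0] - lam • (1 : Matrix (Fin 5) (Fin 5) ℝ)).det = _
    simp [Matrix.det_succ_row_zero, Fin.sum_univ_succ, Matrix.one_apply]
    simp [Fin.succAbove, Fin.ext_iff]
    field_simp
    ring
  refine ⟨hdet, ?_⟩
  rw [hdet]
  have hsq : (u - lam) ^ 2 - a ^ 2 = (u - lam - a) * (u - lam + a) := by ring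
  rw [hsq]
  constructor
  · intro h
    rcases mul_eq_zero.1 h with h | h
    · rcases mul_eq_zero.1 h with h | h
      · rcases mul_eq_zero.1 h with h | h
        · right; right; right; right; linarith [neg_eq_zero.1 h]
        · left; linarith [sub_eq_zero.1 h]
      · right; right; left; linarith [sub_eq_zero.1 h]
    · rcases mul_eq_zero.1 h with h | h
      · right; left; linarith
      · right; right; right; left; linarith
  · rintro (h | h | h | h | h) <;> subst h <;> ring
end

section
/- Let α, ρ, u, a, u_s, b be real numbers with α ≠ 0, ρ > 0 and (u − u_s)² ≠ a², and let C be the 5×5 real matrix with rows (u_s, 0, 0, 0, 0), (ρ(u−u_s)/α, u, ρ, 0, 0), (0, a²/ρ, u, b/ρ, 0), (0, 0, 0, u, 0), (0, 0, 0, 0, 0). Then the vector R₀ = (1, −ρ(u−u_s)²/(α((u−u_s)² − a²)), (u−u_s)a²/(α((u−u_s)² − a²)), 0, 0) satisfies C·R₀ = u_s·R₀, i.e. R₀ is an eigenvector of C for the eigenvalue u_s. -/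
/-- `R₀` is an eigenvector of the primitive-variable system matrix `C` of the
reduced Baer–Nunziato model for the eigenvalue `u_s` (the material interface). -/
theorem reducedBN_eigenvector_R0 (α ρ u a u_s b : ℝ) (hα : α ≠ 0) (hρ : 0 < ρ)
    (hres : (u - u_s) ^ 2 ≠ a ^ 2) :
    let C : Matrix (Fin 5) (Fin 5) ℝ :=
      !![u_s, 0, 0, 0, 0;
         ρ * (u - u_s) / α, u, ρ, 0, 0;
         0, a ^ 2 / ρ, u, b / ρ, 0;
         0, 0, 0, u, 0;
         0, 0, 0, 0, 0]
    let R0 : Fin 5 → ℝ :=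
      ![1, -(ρ * (u - u_s) ^ 2) / (α * ((u - u_s) ^ 2 - a ^ 2)),
        (u - u_s) * a ^ 2 / (α * ((u - u_s) ^ 2 - a ^ 2)), 0, 0]
    C.mulVec R0 = u_s • R0 := by
  intro C R0
  have hd : (u - u_s) ^ 2 - a ^ 2 ≠ 0 := sub_ne_zero.mpr hres
  funext i
  fin_cases i <;>
    simp [C, R0, Matrix.mulVec, dotProduct, Fin.sum_univ_five] <;>
    field_simp <;> ring
end

section
/- Let α, ρ, u, a, u_s, b be real numbers with α ≠ 0, ρ > 0, a ≠ 0, b ≠ 0 and (u − u_s)² ≠ a², and let C be the 5×5 real matrix with rows (u_s, 0, 0, 0, 0), (ρ(u−u_s)/α, u, ρ, 0, 0), (0, a²/ρ, u, b/ρ, 0), (0, 0, 0, u, 0), (0, 0, 0, 0, 0). Let P be the 5×5 matrix whose columns are R₀ = (1, −ρ(u−u_s)²/(α((u−u_s)²−a²)), (u−u_s)a²/(α((u−u_s)²−a²)), 0, 0), R₁,₁ = (0, 1, −a/ρ, 0, 0), R₁,₂ = (0, 1, 0, −a²/b, 0), R₁,₃ = (0, 1, a/ρ, 0, 0) and R₂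 = (0, 0, 0, 0, 1). Then P is invertible and P⁻¹·C·P = diag(u_s, u − a, u, u + a, 0); in particular C has a full set of 5 linearly independent real eigenvectors, so the reduced Baer–Nunziato system is hyperbolic at such states. -/
set_option maxHeartbeats 2000000


/-- The matrix `P` whose columns are the eigenvectors `R₀, R₁,₁, R₁,₂, R₁,₃, R₂`
diagonalizes the primitive-variable system matrix `C` of the reduced
Baer–Nunziato model: `P` is invertible and `P⁻¹ C P = diag(u_s, u-a, u, u+a, 0)`.
In particular `C` has a full set of 5 linearly independent real eigenvectors,
so the reduced Baer–Nunziato system is hyperbolic at such states. -/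
theorem reducedBN_diagonalizable (α ρ u a u_s b : ℝ) (hα : α ≠ 0) (hρ : 0 < ρ)
    (ha : a ≠ 0) (hb : b ≠ 0) (hres : (u - u_s) ^ 2 ≠ a ^ 2) :
    let C : Matrix (Fin 5) (Fin 5) ℝ :=
      !![u_s, 0, 0, 0, 0;
         ρ * (u - u_s) / α, u, ρ, 0, 0;
         0, a ^ 2 / ρ, u, b / ρ, 0;
         0, 0, 0, u, 0;
         0, 0, 0, 0, 0]
    -- columns of P are R₀, R₁,₁, R₁,₂, R₁,₃, R₂
    let P : Matrix (Fin 5) (Fin 5) ℝ :=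
      !![1, 0, 0, 0, 0;
         -(ρ * (u - u_s) ^ 2) / (α * ((u - u_s) ^ 2 - a ^ 2)), 1, 1, 1, 0;
         (u - u_s) * a ^ 2 / (α * ((u - u_s) ^ 2 - a ^ 2)), -(a / ρ), 0, a / ρ, 0;
         0, 0, -(a ^ 2 / b), 0, 0;
         0, 0, 0, 0, 1]
    IsUnit P ∧ P⁻¹ * C * P = Matrix.diagonal ![u_s, u - a, u, u + a, 0] := by
  intro C P
  have hρ' : ρ ≠ 0 := ne_of_gt hρ
  have hd : (u - u_s) ^ 2 - a ^ 2 ≠ 0 := sub_ne_zero.mpr hres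
  have hdet : P.det ≠ 0 := by
    have : P.det = 2 * a ^ 3 / (b * ρ) := by
      simp [P, Matrix.det_succ_row_zero, Fin.sum_univ_succ, Fin.succAbove]
      field_simp
      ring
    rw [this]
    positivity
  have hP : IsUnit P := by
    rw [Matrix.isUnit_iff_isUnit_det, isUnit_iff_ne_zero]
    exact hdet
  refine ⟨hP, ?_⟩
  have key : C * P = P * Matrix.diagonal ![u_s, u - a, u, u + a, 0] := by
    ext i j
    fin_cases i <;> fin_cases j <;>
      simp [C, P, Matrix.mul_apply, Fin.sum_univ_five, Matrix.diagonal] <;>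
      field_simp <;> ring
  calc P⁻¹ * C * P = P⁻¹ * (C * P) := by rw [Matrix.mul_assoc]
    _ = P⁻¹ * (P * Matrix.diagonal ![u_s, u - a, u, u + a, 0]) := by rw [key]
    _ = P⁻¹ * P * Matrix.diagonal ![u_s, u - a, u, u + a, 0] := by rw [Matrix.mul_assoc]
    _ = Matrix.diagonal ![u_s, u - a, u, u + a, 0] := by
        rw [Matrix.nonsing_inv_mul P ((Matrix.isUnit_iff_isUnit_det P).mp hP), Matrix.one_mul]
end

section
/- Let ρ⁺ > 0 and m⁺, E⁺, u_s⁻, u_s⁺, p, S be real numbers with S ≠ 0, and set ū_s = (u_s⁻ + u_s⁺)/2. Suppose the generalized Rankine–Hugoniot conditions for the material-interface wave hold: ū_s = S, m⁺ = S·ρ⁺, (m⁺)²/ρ⁺ = S·m⁺, m⁺·E⁺/ρ⁺ + (m⁺/ρ⁺ − ū_s)·p = S·E⁺, and 0 = S·(u_s⁺ − u_s⁻). Then u_s⁺ = u_s⁻ = S (the wave is a contact moving with the solid velocity) and m⁺/ρ⁺ = S; that is, the fluid velocity u⁺ := m⁺/ρ⁺ on the gas side equals the solid velocity u_s := u_s⁺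 = u_s⁻. -/
/-- Generalized Rankine–Hugoniot proof (case `S ≠ 0`): if the jump conditions
for the material-interface wave of the reduced Baer–Nunziato model hold with
speed `S ≠ 0` between the pure-solid state `(0,0,0,0,u_s⁻)` and the pure-gas
state `(1, ρ⁺, m⁺, E⁺, u_s⁺)`, then the wave is a contact moving with the
solid velocity, `u_s⁺ = u_s⁻ = S`, and the gas velocity `u⁺ = m⁺/ρ⁺` equals
the solid velocity. -/
theorem reducedBN_interface_velocity_RH_nonzero_speed
    (ρp mp Ep usm usp p S : ℝ) (hρp : 0 < ρp) (hS : S ≠ 0)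
    (hbar : (usm + usp) / 2 = S)
    (h2 : mp = S * ρp)
    (h3 : mp ^ 2 / ρp = S * mp)
    (h4 : mp * Ep / ρp + (mp / ρp - (usm + usp) / 2) * p = S * Ep)
    (h5 : (0 : ℝ) = S * (usp - usm)) :
    usp = S ∧ usm = S ∧ mp / ρp = S := by
  have heq : usp = usm := by
    have := (mul_eq_zero.mp h5.symm).resolve_left hS
    linarith
  have husp : usp = S := by rw [heq] at hbar; linarith
  refine ⟨husp, by linarith, ?_⟩
  rw [h2, mul_div_assoc, div_self hρp.ne', mul_one]
end

section
/- Let γ > 1 and define the ideal-gas pressure on D = {q ∈ ℝ⁵ : q₁ > 0, q₂ > 0} by p(q) = (γ − 1)·(q₄ − q₃²/(2q₂))/q₁. Let Q⁻ = (0, 0, 0, 0, u_s⁻) and Q⁺ = (1, ρ⁺, m⁺, E⁺, u_s⁺) with ρ⁺ > 0, and let Ψ(τ) = (1 − τ)·Q⁻ + τ·Q⁺ be the straight-line segment path connecting them. Then for every τ ∈ (0, 1], Ψ(τ) ∈ D and p(Ψ(τ)) = p(Q⁺) = (γ − 1)·(E⁺ − (m⁺)²/(2ρ⁺)); i.e.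 the pressure is constant along the straight-line path from the pure-solid state to the pure-gas state. -/
/-- The ideal-gas pressure `p(q) = (γ-1)(q₄ - q₃²/(2q₂))/q₁` (in conserved
variables `q = (α, αρ, αρu, αρE, u_s)`) is constant along the straight-line
segment path `Ψ(τ) = (1-τ)Q⁻ + τQ⁺` from the pure-solid state
`Q⁻ = (0,0,0,0,u_s⁻)` to the pure-gas state `Q⁺ = (1, ρ⁺, m⁺, E⁺, u_s⁺)`:
for every `τ ∈ (0,1]`, `Ψ(τ)` lies in the admissible set
`D = {q : q₁ > 0, q₂ > 0}` and `p(Ψ(τ)) = p(Q⁺) = (γ-1)(E⁺ - m⁺²/(2ρ⁺))`. -/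
theorem reducedBN_pressure_constant_along_segment_path
    (γ : ℝ) (hγ : 1 < γ) (ρp mp Ep usm usp : ℝ) (hρp : 0 < ρp) :
    let p : (Fin 5 → ℝ) → ℝ := fun q => (γ - 1) * (q 3 - (q 2) ^ 2 / (2 * q 1)) / q 0
    let Qm : Fin 5 → ℝ := ![0, 0, 0, 0, usm]
    let Qp : Fin 5 → ℝ := ![1, ρp, mp, Ep, usp]
    let Ψ : ℝ → Fin 5 → ℝ := fun τ => (1 - τ) • Qm + τ • Qp
    ∀ τ ∈ Set.Ioc (0 : ℝ) 1,
      (0 < Ψ τ 0 ∧ 0 < Ψ τ 1) ∧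
      p (Ψ τ) = p Qp ∧
      p Qp = (γ - 1) * (Ep - mp ^ 2 / (2 * ρp)) := by
  intro p Qm Qp Ψ τ hτ
  obtain ⟨hτ0, _⟩ := hτ
  have h0 : Ψ τ 0 = τ := by simp [Ψ, Qm, Qp]
  have h1 : Ψ τ 1 = τ * ρp := by simp [Ψ, Qm, Qp]
  have h2 : Ψ τ 2 = τ * mp := by simp [Ψ, Qm, Qp]
  have h3 : Ψ τ 3 = τ * Ep := by simp [Ψ, Qm, Qp]
  refine ⟨⟨by rw [h0]; exact hτ0, by rw [h1]; positivity⟩, ?_, ?_⟩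
  · simp only [p, h0, h1, h2, h3, Qp]
    simp only [Matrix.cons_val_zero, Matrix.cons_val_one, Matrix.head_cons,
      Matrix.cons_val_two, Matrix.cons_val_three, Matrix.tail_cons]
    field_simp
  · simp only [p, Qp]
    simp only [Matrix.cons_val_zero, Matrix.cons_val_one, Matrix.head_cons,
      Matrix.cons_val_two, Matrix.cons_val_three, Matrix.tail_cons]
    ring
end

section
/- Let γ > 1 and define on D = {q ∈ ℝ⁵ : q₁ > 0, q₂ > 0} the pressure p(q) = (γ−1)(q₄ − q₃²/(2q₂))/q₁ with partial derivatives ∂p/∂q₁ = −p/q₁, ∂p/∂q₂ = (γ−1)q₃²/(2q₁q₂²), ∂p/∂q₃ = −(γ−1)q₃/(q₁q₂), ∂p/∂q₄ = (γ−1)/q₁, and the 5×5 system matrix A(q) with rows: row 1 = (q₅, 0, 0, 0, 0); row 2 = (0, 0, 1, 0, 0); row 3 = (q₁∂p/∂q₁, −(q₃/q₂)² + q₁∂p/∂q₂, 2q₃/q₂ + q₁∂p/∂q₃, q₁∂p/∂q₄, 0); row 4 = ((q₃/q₂ − q₅)p + (q₁q₃/q₂)∂p/∂q₁, −q₃(q₄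 + q₁p)/q₂² + (q₁q₃/q₂)∂p/∂q₂, (q₄ + q₁p)/q₂ + (q₁q₃/q₂)∂p/∂q₃, (q₃/q₂)(1 + q₁∂p/∂q₄), 0); row 5 = (0, 0, 0, 0, 0). Let Q⁻ = (0,0,0,0,u_s⁻), Q⁺ = (1, ρ⁺, m⁺, E⁺, u_s⁺) with ρ⁺ > 0, Ψ(τ) = (1−τ)Q⁻ + τQ⁺, and p⁺ = (γ−1)(E⁺ − (m⁺)²/(2ρ⁺)). Then for every τ ∈ (0, 1], A(Ψ(τ))·(Q⁺ − Q⁻) = ( u_{s,τ}, m⁺, (m⁺)²/ρ⁺, (m⁺/ρ⁺ − u_{s,τ})·p⁺ + m⁺E⁺/ρ⁺, 0 ), where u_{s,τ} = (1−τ)u_s⁻ + τu_s⁺; i.e. the path parameter τ cancels everywhere in the path integrand except where the solid velocity occurs. -/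
private lemma vecCons_congr {n : ℕ} {a b : ℝ} {u v : Fin n → ℝ}
    (h1 : a = b) (h2 : u = v) : Matrix.vecCons a u = Matrix.vecCons b v := by
  rw [h1, h2]

/-- Along the straight-line segment path `Ψ(τ) = (1-τ)Q⁻ + τQ⁺` from the
pure-solid state `Q⁻ = (0,0,0,0,u_s⁻)` to the pure-gas state
`Q⁺ = (1, ρ⁺, m⁺, E⁺, u_s⁺)`, the integrand `A(Ψ(τ))·(Q⁺ - Q⁻)` of the
Dal Maso–Le Floch–Murat generalized Rankine–Hugoniot condition for the reduced
Baer–Nunziato model equals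
`(u_{s,τ}, m⁺, m⁺²/ρ⁺, (m⁺/ρ⁺ - u_{s,τ})p⁺ + m⁺E⁺/ρ⁺, 0)` with
`u_{s,τ} = (1-τ)u_s⁻ + τu_s⁺`: the path parameter `τ` cancels everywhere
except where the solid velocity occurs. -/
theorem reducedBN_RH_integrand_along_segment_path
    (γ : ℝ) (hγ : 1 < γ) (ρp mp Ep usm usp : ℝ) (hρp : 0 < ρp) :
    let p : (Fin 5 → ℝ) → ℝ :=
      fun q => (γ - 1) * (q 3 - (q 2) ^ 2 / (2 * q 1)) / q 0
    let dp1 : (Fin 5 → ℝ) → ℝ := fun q => -(p q) / q 0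
    let dp2 : (Fin 5 → ℝ) → ℝ :=
      fun q => (γ - 1) * (q 2) ^ 2 / (2 * q 0 * (q 1) ^ 2)
    let dp3 : (Fin 5 → ℝ) → ℝ := fun q => -((γ - 1) * q 2 / (q 0 * q 1))
    let dp4 : (Fin 5 → ℝ) → ℝ := fun q => (γ - 1) / q 0
    let A : (Fin 5 → ℝ) → Matrix (Fin 5) (Fin 5) ℝ := fun q =>
      !![q 4, 0, 0, 0, 0;
         0, 0, 1, 0, 0;
         q 0 * dp1 q, -(q 2 / q 1) ^ 2 + q 0 * dp2 q,
           2 * (q 2 / q 1) + q 0 * dp3 q, q 0 * dp4 q, 0;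
         (q 2 / q 1 - q 4) * p q + (q 0 * q 2 / q 1) * dp1 q,
           -(q 2 * (q 3 + q 0 * p q)) / (q 1) ^ 2 + (q 0 * q 2 / q 1) * dp2 q,
           (q 3 + q 0 * p q) / q 1 + (q 0 * q 2 / q 1) * dp3 q,
           (q 2 / q 1) * (1 + q 0 * dp4 q), 0;
         0, 0, 0, 0, 0]
    let Qm : Fin 5 → ℝ := ![0, 0, 0, 0, usm]
    let Qp : Fin 5 → ℝ := ![1, ρp, mp, Ep, usp]
    let Ψ : ℝ → Fin 5 → ℝ := fun τ => (1 - τ) • Qm + τ • Qp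
    let pp : ℝ := (γ - 1) * (Ep - mp ^ 2 / (2 * ρp))
    ∀ τ ∈ Set.Ioc (0 : ℝ) 1,
      (A (Ψ τ)).mulVec (Qp - Qm)
        = ![(1 - τ) * usm + τ * usp, mp, mp ^ 2 / ρp,
            (mp / ρp - ((1 - τ) * usm + τ * usp)) * pp + mp * Ep / ρp, 0] := by
  intro p dp1 dp2 dp3 dp4 A Qm Qp Ψ pp τ hτ
  obtain ⟨hτ0, hτ1⟩ := hτ
  have hτ' : τ ≠ 0 := ne_of_gt hτ0
  have hρ' : ρp ≠ 0 := ne_of_gt hρp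
  have hΨ : Ψ τ = ![τ, τ * ρp, τ * mp, τ * Ep, (1 - τ) * usm + τ * usp] := by
    funext i
    fin_cases i <;> simp [Ψ, Qm, Qp] <;> ring
  have hD : Qp - Qm = ![1, ρp, mp, Ep, usp - usm] := by
    funext i
    fin_cases i <;> simp [Qm, Qp]
  rw [hΨ, hD]
  simp only [A, p, dp1, dp2, dp3, dp4, Matrix.cons_val_zero, Matrix.cons_val_one,
    Matrix.head_cons, Matrix.cons_val_two, Matrix.tail_cons, Matrix.cons_val_three,
    Matrix.cons_val_four, Matrix.cons_mulVec, Matrix.cons_dotProduct,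
    Matrix.dotProduct_of_isEmpty, Matrix.empty_mulVec,
    add_zero, pp]
  refine vecCons_congr ?_ (vecCons_congr ?_ (vecCons_congr ?_
    (vecCons_congr ?_ (vecCons_congr ?_ rfl))))
  · ring
  · ring
  · field_simp
    ring
  · field_simp
    ring
  · ring
end

section
/- Let γ > 1 and define on D = {q ∈ ℝ⁵ : q₁ > 0, q₂ > 0} the pressure p(q) = (γ−1)(q₄ − q₃²/(2q₂))/q₁ and the 5×5 system matrix A(q) with rows: row 1 = (q₅, 0, 0, 0, 0); row 2 = (0, 0, 1, 0, 0); row 3 = (q₁∂p/∂q₁, −(q₃/q₂)² + q₁∂p/∂q₂, 2q₃/q₂ + q₁∂p/∂q₃, q₁∂p/∂q₄, 0); row 4 = ((q₃/q₂ − q₅)p + (q₁q₃/q₂)∂p/∂q₁, −q₃(q₄ + q₁p)/q₂² + (q₁q₃/q₂)∂p/∂q₂, (q₄ + q₁p)/q₂ + (q₁q₃/q₂)∂p/∂q₃, (q₃/q₂)(1 + q₁∂p/∂q₄), 0); row 5 = (0, 0, 0, 0, 0), where ∂p/∂q₁ = −p/q₁, ∂p/∂q₂ = (γ−1)q₃²/(2q₁q₂²),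 ∂p/∂q₃ = −(γ−1)q₃/(q₁q₂), ∂p/∂q₄ = (γ−1)/q₁. Let Q⁻ = (0,0,0,0,u_s⁻), Q⁺ = (1, ρ⁺, m⁺, E⁺, u_s⁺) with ρ⁺ > 0, Ψ(τ) = (1−τ)Q⁻ + τQ⁺, and p⁺ = (γ−1)(E⁺ − (m⁺)²/(2ρ⁺)). Then the componentwise integral ∫₀¹ A(Ψ(τ))·(Q⁺ − Q⁻) dτ (the integrand being defined for τ ∈ (0,1] and integrable on [0,1]) equals ( ū_s, m⁺, (m⁺)²/ρ⁺, (m⁺/ρ⁺ − ū_s)·p⁺ + m⁺E⁺/ρ⁺, 0 ), where ū_s = (u_s⁻ + u_s⁺)/2. -/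
open MeasureTheory

private lemma reducedBN_aux_lin (a b : ℝ) :
    (∫ τ in (0:ℝ)..1, (a + τ * b)) = a + b / 2 := by
  have h1 : IntervalIntegrable (fun τ : ℝ => τ * b) volume 0 1 :=
    (continuous_id.mul continuous_const).intervalIntegrable 0 1
  rw [intervalIntegral.integral_add intervalIntegrable_const h1,
    intervalIntegral.integral_mul_const, integral_id,
    intervalIntegral.integral_const]
  norm_num
  ring

private lemma reducedBN_aux (f g : ℝ → ℝ) (hg : Continuous g)
    (h : ∀ τ ∈ Set.uIoc (0:ℝ) 1, f τ = g τ) (c : ℝ)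
    (hgi : (∫ τ in (0:ℝ)..1, g τ) = c) :
    IntervalIntegrable f volume 0 1 ∧ (∫ τ in (0:ℝ)..1, f τ) = c := by
  have hae : g =ᵐ[volume.restrict (Set.uIoc (0:ℝ) 1)] f :=
    (ae_restrict_iff' measurableSet_uIoc).2 (ae_of_all _ fun τ hτ => (h τ hτ).symm)
  refine ⟨(hg.intervalIntegrable 0 1).congr_ae hae, ?_⟩
  rw [intervalIntegral.integral_congr_ae (ae_of_all _ h), hgi]

set_option maxHeartbeats 2000000
/-- The componentwise path integral `∫₀¹ A(Ψ(τ))·(Q⁺ - Q⁻) dτ` of the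
Dal Maso–Le Floch–Murat generalized Rankine–Hugoniot condition for the reduced
Baer–Nunziato model, along the straight-line segment path `Ψ` from the
pure-solid state `Q⁻ = (0,0,0,0,u_s⁻)` to the pure-gas state
`Q⁺ = (1, ρ⁺, m⁺, E⁺, u_s⁺)`, is well defined (integrable) and equals
`(ū_s, m⁺, m⁺²/ρ⁺, (m⁺/ρ⁺ - ū_s)p⁺ + m⁺E⁺/ρ⁺, 0)`, where
`ū_s = (u_s⁻ + u_s⁺)/2`. -/
theorem reducedBN_RH_path_integral
    (γ : ℝ) (hγ : 1 < γ) (ρp mp Ep usm usp : ℝ) (hρp : 0 < ρp) :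
    let p : (Fin 5 → ℝ) → ℝ :=
      fun q => (γ - 1) * (q 3 - (q 2) ^ 2 / (2 * q 1)) / q 0
    let dp1 : (Fin 5 → ℝ) → ℝ := fun q => -(p q) / q 0
    let dp2 : (Fin 5 → ℝ) → ℝ :=
      fun q => (γ - 1) * (q 2) ^ 2 / (2 * q 0 * (q 1) ^ 2)
    let dp3 : (Fin 5 → ℝ) → ℝ := fun q => -((γ - 1) * q 2 / (q 0 * q 1))
    let dp4 : (Fin 5 → ℝ) → ℝ := fun q => (γ - 1) / q 0
    let A : (Fin 5 → ℝ) → Matrix (Fin 5) (Fin 5) ℝ := fun q =>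
      !![q 4, 0, 0, 0, 0;
         0, 0, 1, 0, 0;
         q 0 * dp1 q, -(q 2 / q 1) ^ 2 + q 0 * dp2 q,
           2 * (q 2 / q 1) + q 0 * dp3 q, q 0 * dp4 q, 0;
         (q 2 / q 1 - q 4) * p q + (q 0 * q 2 / q 1) * dp1 q,
           -(q 2 * (q 3 + q 0 * p q)) / (q 1) ^ 2 + (q 0 * q 2 / q 1) * dp2 q,
           (q 3 + q 0 * p q) / q 1 + (q 0 * q 2 / q 1) * dp3 q,
           (q 2 / q 1) * (1 + q 0 * dp4 q), 0;
         0, 0, 0, 0, 0]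
    let Qm : Fin 5 → ℝ := ![0, 0, 0, 0, usm]
    let Qp : Fin 5 → ℝ := ![1, ρp, mp, Ep, usp]
    let Ψ : ℝ → Fin 5 → ℝ := fun τ => (1 - τ) • Qm + τ • Qp
    let pp : ℝ := (γ - 1) * (Ep - mp ^ 2 / (2 * ρp))
    let usbar : ℝ := (usm + usp) / 2
    ∀ i : Fin 5,
      IntervalIntegrable (fun τ => (A (Ψ τ)).mulVec (Qp - Qm) i) volume 0 1 ∧
      (∫ τ in (0 : ℝ)..1, (A (Ψ τ)).mulVec (Qp - Qm) i)
        = ![usbar, mp, mp ^ 2 / ρp,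
            (mp / ρp - usbar) * pp + mp * Ep / ρp, 0] i := by
  intro p dp1 dp2 dp3 dp4 A Qm Qp Ψ pp usbar
  have hρ : ρp ≠ 0 := ne_of_gt hρp
  have hkey : ∀ τ ∈ Set.uIoc (0:ℝ) 1, ∀ i : Fin 5,
      (A (Ψ τ)).mulVec (Qp - Qm) i
        = ![usm + τ * (usp - usm), mp, mp ^ 2 / ρp,
            (-(usm * pp) + (γ * mp * Ep / ρp - (γ - 1) * mp ^ 3 / (2 * ρp ^ 2)))
              + τ * (-((usp - usm) * pp)), 0] i := by
    intro τ hτ i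
    rw [Set.uIoc_of_le zero_le_one] at hτ
    have hτ0 : τ ≠ 0 := ne_of_gt hτ.1
    fin_cases i <;>
    · simp only [A, Ψ, Qm, Qp, p, dp1, dp2, dp3, dp4, pp, Matrix.mulVec,
        dotProduct, Fin.sum_univ_five, Pi.add_apply, Pi.smul_apply,
        smul_eq_mul, Pi.sub_apply, Matrix.cons_val_zero, Matrix.cons_val_one,
        Matrix.head_cons, Matrix.cons_val_two, Matrix.tail_cons,
        Matrix.cons_val_three, Matrix.cons_val_four, Matrix.head_fin_const,
        Matrix.of_apply, Matrix.cons_val', Matrix.cons_val_fin_one,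
        Matrix.empty_val', Fin.zero_eta, Fin.mk_one, Fin.isValue, Fin.reduceFinMk, mul_zero,
        zero_add]
      field_simp
      try ring
  intro i
  fin_cases i
  · refine reducedBN_aux _ (fun τ => usm + τ * (usp - usm)) (by fun_prop)
      (fun τ hτ => hkey τ hτ 0) _ ?_
    rw [reducedBN_aux_lin]
    show usm + (usp - usm) / 2 = usbar
    simp only [usbar]; ring
  · refine reducedBN_aux _ (fun _ => mp) continuous_const
      (fun τ hτ => hkey τ hτ 1) _ ?_
    simp
  · refine reducedBN_aux _ (fun _ => mp ^ 2 / ρp) (by fun_prop)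
      (fun τ hτ => hkey τ hτ 2) _ ?_
    simp
  · refine reducedBN_aux _
      (fun τ => (-(usm * pp) + (γ * mp * Ep / ρp - (γ - 1) * mp ^ 3 / (2 * ρp ^ 2)))
        + τ * (-((usp - usm) * pp))) (by fun_prop)
      (fun τ hτ => hkey τ hτ 3) _ ?_
    rw [reducedBN_aux_lin]
    show _ = (mp / ρp - usbar) * pp + mp * Ep / ρp
    simp only [usbar, pp]
    field_simp
    ring
  · refine reducedBN_aux _ (fun _ => 0) continuous_const
      (fun τ hτ => hkey τ hτ 4) _ ?_
    simp
end

section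
/- Consider the two-dimensional reduced Baer–Nunziato model in conserved variables q = (q₁,…,q₇) = (α, αρ, αρu, αρv, αρE, u_s, v_s) with q₁ > 0, q₂ > 0, pressure p(q) = (γ−1)(q₅ − (q₃² + q₄²)/(2q₂))/q₁ for some γ > 1, and non-conservative matrices B_x(q), B_y(q) ∈ ℝ^{7×7} whose only nonzero entries are in the first column: column 1 of B_x(q) = (q₆, 0, −p, 0, −p·q₆, 0, 0) and column 1 of B_y(q) = (q₇, 0, 0, −p, −p·q₇, 0, 0). For θ ∈ ℝ let T(θ) be the 7×7 matrix acting as the identity on components 1, 2, 5 and as the planar rotation (x, y) ↦ (x cos θ + y sin θ, −x sin θ + y cos θ) on the pairs (q₃, q₄) and (q₆, q₇). Then for every admissible q and every θ, T(θ)⁻¹ · B_x(T(θ)·q) · T(θ) = cos θ · B_x(q) + sin θ · B_y(q); i.e. the non-conservative part of the model is rotationally invariant. -/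
private lemma cvz2 {α : Type*} (x : α) (f : Fin 1 → α) : Matrix.vecCons x f 0 = x := rfl
private lemma cv2_1 {α : Type*} (x : α) (f : Fin 1 → α) : Matrix.vecCons x f 1 = f 0 := rfl
private lemma cvz3 {α : Type*} (x : α) (f : Fin 2 → α) : Matrix.vecCons x f 0 = x := rfl
private lemma cv3_1 {α : Type*} (x : α) (f : Fin 2 → α) : Matrix.vecCons x f 1 = f 0 := rfl
private lemma cv3_2 {α : Type*} (x : α) (f : Fin 2 → α) : Matrix.vecCons x f 2 = f 1 := rfl
private lemma cvz4 {α : Type*} (x : α) (f : Fin 3 → α) : Matrix.vecCons x f 0 = x := rfl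
private lemma cv4_1 {α : Type*} (x : α) (f : Fin 3 → α) : Matrix.vecCons x f 1 = f 0 := rfl
private lemma cv4_2 {α : Type*} (x : α) (f : Fin 3 → α) : Matrix.vecCons x f 2 = f 1 := rfl
private lemma cv4_3 {α : Type*} (x : α) (f : Fin 3 → α) : Matrix.vecCons x f 3 = f 2 := rfl
private lemma cvz5 {α : Type*} (x : α) (f : Fin 4 → α) : Matrix.vecCons x f 0 = x := rfl
private lemma cv5_1 {α : Type*} (x : α) (f : Fin 4 → α) : Matrix.vecCons x f 1 = f 0 := rfl
private lemma cv5_2 {α : Type*} (x : α) (f : Fin 4 → α) : Matrix.vecCons x f 2 = f 1 := rfl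
private lemma cv5_3 {α : Type*} (x : α) (f : Fin 4 → α) : Matrix.vecCons x f 3 = f 2 := rfl
private lemma cv5_4 {α : Type*} (x : α) (f : Fin 4 → α) : Matrix.vecCons x f 4 = f 3 := rfl
private lemma cvz6 {α : Type*} (x : α) (f : Fin 5 → α) : Matrix.vecCons x f 0 = x := rfl
private lemma cv6_1 {α : Type*} (x : α) (f : Fin 5 → α) : Matrix.vecCons x f 1 = f 0 := rfl
private lemma cv6_2 {α : Type*} (x : α) (f : Fin 5 → α) : Matrix.vecCons x f 2 = f 1 := rfl
private lemma cv6_3 {α : Type*} (x : α) (f : Fin 5 → α) : Matrix.vecCons x f 3 = f 2 := rfl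
private lemma cv6_4 {α : Type*} (x : α) (f : Fin 5 → α) : Matrix.vecCons x f 4 = f 3 := rfl
private lemma cv6_5 {α : Type*} (x : α) (f : Fin 5 → α) : Matrix.vecCons x f 5 = f 4 := rfl
private lemma cvz7 {α : Type*} (x : α) (f : Fin 6 → α) : Matrix.vecCons x f 0 = x := rfl
private lemma cv7_1 {α : Type*} (x : α) (f : Fin 6 → α) : Matrix.vecCons x f 1 = f 0 := rfl
private lemma cv7_2 {α : Type*} (x : α) (f : Fin 6 → α) : Matrix.vecCons x f 2 = f 1 := rfl
private lemma cv7_3 {α : Type*} (x : α) (f : Fin 6 → α) : Matrix.vecCons x f 3 = f 2 := rfl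
private lemma cv7_4 {α : Type*} (x : α) (f : Fin 6 → α) : Matrix.vecCons x f 4 = f 3 := rfl
private lemma cv7_5 {α : Type*} (x : α) (f : Fin 6 → α) : Matrix.vecCons x f 5 = f 4 := rfl
private lemma cv7_6 {α : Type*} (x : α) (f : Fin 6 → α) : Matrix.vecCons x f 6 = f 5 := rfl
private lemma vh0 {α : Type*} [Zero α] {n : ℕ} :
    Matrix.vecHead (fun _ : Fin (n+1) => (0:α)) = 0 := rfl
private lemma vt0 {α : Type*} [Zero α] {n : ℕ} :
    Matrix.vecTail (fun _ : Fin (n+1) => (0:α)) = fun _ => (0:α) := rfl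

private lemma mul_vecMulVec' {l m n : Type*} [Fintype m]
    (A : Matrix l m ℝ) (u : m → ℝ) (v : n → ℝ) :
    A * Matrix.vecMulVec u v = Matrix.vecMulVec (A.mulVec u) v := by
  ext i j
  simp [Matrix.mul_apply, Matrix.vecMulVec_apply, Matrix.mulVec,
    dotProduct, Finset.sum_mul, mul_assoc]

private lemma vecMulVec_mul' {l m n : Type*} [Fintype m]
    (u : l → ℝ) (v : m → ℝ) (A : Matrix m n ℝ) :
    Matrix.vecMulVec u v * A = Matrix.vecMulVec u (Matrix.vecMul v A) := by
  ext i j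
  simp [Matrix.mul_apply, Matrix.vecMulVec_apply, Matrix.vecMul,
    dotProduct, Finset.mul_sum, mul_assoc]

set_option maxHeartbeats 4000000 in

/-- Rotational invariance of the non-conservative part of the two-dimensional
reduced Baer–Nunziato model in conserved variables
`q = (α, αρ, αρu, αρv, αρE, u_s, v_s)`: for every admissible state `q` and
every angle `θ`, `T(θ)⁻¹ · B_x(T(θ)·q) · T(θ) = cos θ · B_x(q) + sin θ · B_y(q)`,
where `B_x, B_y` are the non-conservative matrices (nonzero only in their first
column: `(u_s, 0, -p, 0, -p·u_s, 0, 0)` resp. `(v_s, 0, 0, -p, -p·v_s, 0, 0)`)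
and `T(θ)` is the identity on the components `α, αρ, αρE` and the planar
rotation on the pairs `(αρu, αρv)` and `(u_s, v_s)`. -/
theorem reducedBN2D_nonconservative_rotational_invariance (γ : ℝ) (hγ : 1 < γ) :
    let p : (Fin 7 → ℝ) → ℝ :=
      fun q => (γ - 1) * (q 4 - ((q 2) ^ 2 + (q 3) ^ 2) / (2 * q 1)) / q 0
    let Bx : (Fin 7 → ℝ) → Matrix (Fin 7) (Fin 7) ℝ := fun q =>
      !![q 5, 0, 0, 0, 0, 0, 0;
         0, 0, 0, 0, 0, 0, 0;
         -(p q), 0, 0, 0, 0, 0, 0;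
         0, 0, 0, 0, 0, 0, 0;
         -(p q) * q 5, 0, 0, 0, 0, 0, 0;
         0, 0, 0, 0, 0, 0, 0;
         0, 0, 0, 0, 0, 0, 0]
    let By : (Fin 7 → ℝ) → Matrix (Fin 7) (Fin 7) ℝ := fun q =>
      !![q 6, 0, 0, 0, 0, 0, 0;
         0, 0, 0, 0, 0, 0, 0;
         0, 0, 0, 0, 0, 0, 0;
         -(p q), 0, 0, 0, 0, 0, 0;
         -(p q) * q 6, 0, 0, 0, 0, 0, 0;
         0, 0, 0, 0, 0, 0, 0;
         0, 0, 0, 0, 0, 0, 0]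
    let T : ℝ → Matrix (Fin 7) (Fin 7) ℝ := fun θ =>
      !![1, 0, 0, 0, 0, 0, 0;
         0, 1, 0, 0, 0, 0, 0;
         0, 0, Real.cos θ, Real.sin θ, 0, 0, 0;
         0, 0, -Real.sin θ, Real.cos θ, 0, 0, 0;
         0, 0, 0, 0, 1, 0, 0;
         0, 0, 0, 0, 0, Real.cos θ, Real.sin θ;
         0, 0, 0, 0, 0, -Real.sin θ, Real.cos θ]
    ∀ q : Fin 7 → ℝ, 0 < q 0 → 0 < q 1 → ∀ θ : ℝ,
      (T θ)⁻¹ * Bx ((T θ).mulVec q) * T θ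
        = Real.cos θ • Bx q + Real.sin θ • By q := by
  intro p Bx By T q h0 h1 θ
  have hsc := Real.sin_sq_add_cos_sq θ
  set c := Real.cos θ with hc
  set s := Real.sin θ with hs
  have hmv : ∀ i, (T θ).mulVec q i = ![q 0, q 1, c * q 2 + s * q 3,
      -(s * q 2) + c * q 3, q 4, c * q 5 + s * q 6, -(s * q 5) + c * q 6] i := by
    intro i
    fin_cases i <;>
      simp [T, Matrix.mulVec, dotProduct, Fin.sum_univ_seven,
        Matrix.vecHead, Matrix.vecTail, cvz2, cv2_1, cvz3, cv3_1, cv3_2, cvz4, cv4_1, cv4_2, cv4_3, cvz5, cv5_1, cv5_2, cv5_3, cv5_4, cvz6, cv6_1, cv6_2, cv6_3, cv6_4, cv6_5, cvz7, cv7_1, cv7_2, cv7_3, cv7_4, cv7_5, cv7_6, vh0, vt0] <;> ring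
  have hp : p ((T θ).mulVec q) = p q := by
    have hsq : (c * q 2 + s * q 3) ^ 2 + (-(s * q 2) + c * q 3) ^ 2
        = (q 2) ^ 2 + (q 3) ^ 2 := by nlinarith [hsc]
    simp only [p, hmv, cvz2, cv2_1, cvz3, cv3_1, cv3_2, cvz4, cv4_1, cv4_2, cv4_3, cvz5, cv5_1, cv5_2, cv5_3, cv5_4, cvz6, cv6_1, cv6_2, cv6_3, cv6_4, cv6_5, cvz7, cv7_1, cv7_2, cv7_3, cv7_4, cv7_5, cv7_6, vh0, vt0, hsq]
  have hinv : (T θ)⁻¹ = !![1, 0, 0, 0, 0, 0, 0;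
      0, 1, 0, 0, 0, 0, 0;
      0, 0, c, -s, 0, 0, 0;
      0, 0, s, c, 0, 0, 0;
      0, 0, 0, 0, 1, 0, 0;
      0, 0, 0, 0, 0, c, -s;
      0, 0, 0, 0, 0, s, c] := by
    apply Matrix.inv_eq_left_inv
    ext i j
    fin_cases i <;> fin_cases j <;>
      simp [T, Matrix.mul_apply, Fin.sum_univ_seven, Matrix.one_apply,
        Matrix.vecHead, Matrix.vecTail, cvz2, cv2_1, cvz3, cv3_1, cv3_2, cvz4, cv4_1, cv4_2, cv4_3, cvz5, cv5_1, cv5_2, cv5_3, cv5_4, cvz6, cv6_1, cv6_2, cv6_3, cv6_4, cv6_5, cvz7, cv7_1, cv7_2, cv7_3, cv7_4, cv7_5, cv7_6, vh0, vt0] <;>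
      nlinarith [hsc]
  have hmv6 : (T θ).mulVec q 5 = c * q 5 + s * q 6 := hmv 5
  have hBx : ∀ r : Fin 7 → ℝ, Bx r
      = Matrix.vecMulVec ![r 5, 0, -(p r), 0, -(p r) * r 5, 0, 0]
        ![1, 0, 0, 0, 0, 0, 0] := by
    intro r
    ext i j
    fin_cases i <;> fin_cases j <;>
      simp [Bx, Matrix.vecMulVec_apply, Matrix.vecHead, Matrix.vecTail, cvz2, cv2_1, cvz3, cv3_1, cv3_2, cvz4, cv4_1, cv4_2, cv4_3, cvz5, cv5_1, cv5_2, cv5_3, cv5_4, cvz6, cv6_1, cv6_2, cv6_3, cv6_4, cv6_5, cvz7, cv7_1, cv7_2, cv7_3, cv7_4, cv7_5, cv7_6, vh0, vt0]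
  have hBy : By q
      = Matrix.vecMulVec ![q 6, 0, 0, -(p q), -(p q) * q 6, 0, 0]
        ![1, 0, 0, 0, 0, 0, 0] := by
    ext i j
    fin_cases i <;> fin_cases j <;>
      simp [By, Matrix.vecMulVec_apply, Matrix.vecHead, Matrix.vecTail, cvz2, cv2_1, cvz3, cv3_1, cv3_2, cvz4, cv4_1, cv4_2, cv4_3, cvz5, cv5_1, cv5_2, cv5_3, cv5_4, cvz6, cv6_1, cv6_2, cv6_3, cv6_4, cv6_5, cvz7, cv7_1, cv7_2, cv7_3, cv7_4, cv7_5, cv7_6, vh0, vt0]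
  have hBxT : Bx ((T θ).mulVec q)
      = Matrix.vecMulVec ![c * q 5 + s * q 6, 0, -(p q), 0,
          -(p q) * (c * q 5 + s * q 6), 0, 0] ![1, 0, 0, 0, 0, 0, 0] := by
    rw [hBx, hp, hmv6]
  have he : Matrix.vecMul (![1, 0, 0, 0, 0, 0, 0] : Fin 7 → ℝ) (T θ)
      = ![1, 0, 0, 0, 0, 0, 0] := by
    funext j
    fin_cases j <;>
      simp [T, Matrix.vecMul, dotProduct, Fin.sum_univ_seven,
        Matrix.vecHead, Matrix.vecTail, cvz2, cv2_1, cvz3, cv3_1, cv3_2, cvz4, cv4_1, cv4_2, cv4_3, cvz5, cv5_1, cv5_2, cv5_3, cv5_4, cvz6, cv6_1, cv6_2, cv6_3, cv6_4, cv6_5, cvz7, cv7_1, cv7_2, cv7_3, cv7_4, cv7_5, cv7_6, vh0, vt0]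
  have hu : (!![1, 0, 0, 0, 0, 0, 0;
      0, 1, 0, 0, 0, 0, 0;
      0, 0, c, -s, 0, 0, 0;
      0, 0, s, c, 0, 0, 0;
      0, 0, 0, 0, 1, 0, 0;
      0, 0, 0, 0, 0, c, -s;
      0, 0, 0, 0, 0, s, c]).mulVec ![c * q 5 + s * q 6, 0, -(p q), 0,
          -(p q) * (c * q 5 + s * q 6), 0, 0]
      = c • ![q 5, 0, -(p q), 0, -(p q) * q 5, 0, 0]
        + s • ![q 6, 0, 0, -(p q), -(p q) * q 6, 0, 0] := by
    funext i
    fin_cases i <;>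
      simp [Matrix.mulVec, dotProduct, Fin.sum_univ_seven,
        Matrix.vecHead, Matrix.vecTail, cvz2, cv2_1, cvz3, cv3_1, cv3_2, cvz4, cv4_1, cv4_2, cv4_3, cvz5, cv5_1, cv5_2, cv5_3, cv5_4, cvz6, cv6_1, cv6_2, cv6_3, cv6_4, cv6_5, cvz7, cv7_1, cv7_2, cv7_3, cv7_4, cv7_5, cv7_6, vh0, vt0] <;> ring
  rw [hinv, hBxT, Matrix.mul_assoc, vecMulVec_mul', he, mul_vecMulVec', hu,
    hBx q, hBy]
  ext i j
  fin_cases i <;> fin_cases j <;>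
    simp [Matrix.vecMulVec_apply, Matrix.vecHead, Matrix.vecTail, Matrix.add_apply, Matrix.smul_apply,
      smul_eq_mul, cvz2, cv2_1, cvz3, cv3_1, cv3_2, cvz4, cv4_1, cv4_2, cv4_3, cvz5, cv5_1, cv5_2, cv5_3, cv5_4, cvz6, cv6_1, cv6_2, cv6_3, cv6_4, cv6_5, cvz7, cv7_1, cv7_2, cv7_3, cv7_4, cv7_5, cv7_6, vh0, vt0] <;> ring
end
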